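/- arXiv:2502.05627 — 3 statements merged into one kernel-verified Lean document; each statement's English description precedes it below -/
import Mathlib

section
/- Let g be a C³ concave function on an open interval containing (−1,1), and suppose there exists a positive finite Borel measure μ on [−1,1] such that g(t) = g(0) + g'(0)t + (1/2)g''(0)∫_{−1}^{1} t²/(1−st) dμ(s) for all t ∈ (−1,1). Then g'''(0) ≥ 3·g''(0), i.e., g satisfies the compatibility inequality D³g(0) ≤ −3·D²g(0) when g''(0) ≤ 0. -/
open MeasureTheory Filter Topology

private lemma lhop_step {φ φ' : ℝ → ℝ} {n : ℕ} {L : ℝ}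
    (hφ : ∀ᶠ t in 𝓝[≠] (0:ℝ), HasDerivAt φ (φ' t) t)
    (h0 : Tendsto φ (𝓝[≠] (0:ℝ)) (𝓝 0))
    (hd : Tendsto (fun t => φ' t / (((n:ℝ)+1) * t^n)) (𝓝[≠] (0:ℝ)) (𝓝 L)) :
    Tendsto (fun t => φ t / t^(n+1)) (𝓝[≠] (0:ℝ)) (𝓝 L) := by
  apply HasDerivAt.lhopital_zero_nhdsNE hφ
    (g' := fun t => ((n:ℝ)+1) * t^n)
  · filter_upwards with t
    simpa using hasDerivAt_pow (n+1) t
  · filter_upwards [self_mem_nhdsWithin] with t (ht : t ≠ 0)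
    positivity
  · exact h0
  · have : Tendsto (fun t : ℝ => t^(n+1)) (𝓝 0) (𝓝 0) := by
      simpa using (continuous_pow (n+1)).tendsto (0:ℝ)
    exact this.mono_left nhdsWithin_le_nhds
  · exact hd

/-- If `g` is `C³` and concave on `(−1,1)` and admits the integral representation
`g(t) = g(0) + g'(0)t + (1/2)g''(0)∫ t²/(1−st) dμ(s)` for a positive finite Borel
measure `μ` on `[−1,1]`, then `g'''(0) ≥ 3 g''(0)`. -/
theorem compatibility_from_integral_rep (g : ℝ → ℝ) (μ : Measure ℝ)
    [IsFiniteMeasure μ] (hsupp : μ (Set.Icc (-1 : ℝ) 1)ᶜ = 0)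
    (hg : ContDiffOn ℝ 3 g (Set.Ioo (-1 : ℝ) 1))
    (hconc : ConcaveOn ℝ (Set.Ioo (-1 : ℝ) 1) g)
    (hrep : ∀ t ∈ Set.Ioo (-1 : ℝ) 1,
      g t = g 0 + deriv g 0 * t +
        (1 / 2) * iteratedDeriv 2 g 0 * ∫ s, t ^ 2 / (1 - s * t) ∂μ) :
    3 * iteratedDeriv 2 g 0 ≤ iteratedDeriv 3 g 0 := by
  set S := Set.Ioo (-1 : ℝ) 1 with hSdef
  have hS : IsOpen S := isOpen_Ioo
  have h0S : (0:ℝ) ∈ S := by constructor <;> norm_num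
  have hSnhds : S ∈ 𝓝 (0:ℝ) := hS.mem_nhds h0S
  have hg1 : ContDiffOn ℝ 2 (deriv g) S := hg.deriv_of_isOpen hS (by norm_num)
  have hg2 : ContDiffOn ℝ 1 (deriv (deriv g)) S := hg1.deriv_of_isOpen hS (by norm_num)
  have hDg : ∀ t ∈ S, HasDerivAt g (deriv g t) t := fun t ht =>
    ((hg.differentiableOn (by norm_num)).differentiableAt (hS.mem_nhds ht)).hasDerivAt
  have hDg1 : ∀ t ∈ S, HasDerivAt (deriv g) (deriv (deriv g) t) t := fun t ht =>
    ((hg1.differentiableOn (by norm_num)).differentiableAt (hS.mem_nhds ht)).hasDerivAt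
  have hDg2 : HasDerivAt (deriv (deriv g)) (deriv (deriv (deriv g)) 0) 0 :=
    ((hg2.differentiableOn (by norm_num)).differentiableAt hSnhds).hasDerivAt
  set D2 := deriv (deriv g) 0 with hD2def
  set D3 := deriv (deriv (deriv g)) 0 with hD3def
  have hiD2 : iteratedDeriv 2 g 0 = D2 := by
    rw [iteratedDeriv_eq_iterate]; rfl
  have hiD3 : iteratedDeriv 3 g 0 = D3 := by
    rw [iteratedDeriv_eq_iterate]; rfl
  have hevS : ∀ᶠ t in 𝓝[≠] (0:ℝ), t ∈ S :=
    eventually_nhdsWithin_of_eventually_nhds (eventually_of_mem hSnhds fun t ht => ht)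
  -- slope limits
  have hslope2 : Tendsto (fun t => (deriv g t - deriv g 0) / t) (𝓝[≠] (0:ℝ)) (𝓝 D2) := by
    have := hasDerivAt_iff_tendsto_slope.1 (hDg1 0 h0S)
    refine this.congr fun t => ?_
    simp [slope_def_field]
  have hslope3 : Tendsto (fun t => (deriv (deriv g) t - D2) / t) (𝓝[≠] (0:ℝ)) (𝓝 D3) := by
    have := hasDerivAt_iff_tendsto_slope.1 hDg2
    refine this.congr fun t => ?_
    simp [slope_def_field, hD2def]
  -- Taylor limit of order 2
  have T2 : Tendsto (fun t => (g t - g 0 - deriv g 0 * t) / t^2) (𝓝[≠] (0:ℝ)) (𝓝 (D2/2)) := by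
    have := lhop_step (φ := fun t => g t - g 0 - deriv g 0 * t)
      (φ' := fun t => deriv g t - deriv g 0) (n := 1) (L := D2/2) ?_ ?_ ?_
    · simpa using this
    · filter_upwards [hevS] with t ht
      have h := ((hDg t ht).sub_const (g 0)).sub ((hasDerivAt_id t).const_mul (deriv g 0))
      simp only [mul_one] at h
      exact h
    · have hc : ContinuousAt g 0 := (hDg 0 h0S).continuousAt
      have : Tendsto (fun t => g t - g 0 - deriv g 0 * t) (𝓝 0)
          (𝓝 (g 0 - g 0 - deriv g 0 * 0)) :=
        (hc.tendsto.sub tendsto_const_nhds).sub ((continuous_const.mul continuous_id).tendsto 0)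
      simpa using this.mono_left nhdsWithin_le_nhds
    · have := hslope2.div_const 2
      refine this.congr fun t => ?_
      rw [div_div]
      push_cast
      ring_nf
  -- Taylor limit of order 3
  have Tint : Tendsto (fun t => (deriv g t - deriv g 0 - D2 * t) / t^2)
      (𝓝[≠] (0:ℝ)) (𝓝 (D3/2)) := by
    have := lhop_step (φ := fun t => deriv g t - deriv g 0 - D2 * t)
      (φ' := fun t => deriv (deriv g) t - D2) (n := 1) (L := D3/2) ?_ ?_ ?_
    · simpa using this
    · filter_upwards [hevS] with t ht
      have h := ((hDg1 t ht).sub_const (deriv g 0)).sub ((hasDerivAt_id t).const_mul D2)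
      simp only [mul_one] at h
      exact h
    · have hc : ContinuousAt (deriv g) 0 := (hDg1 0 h0S).continuousAt
      have : Tendsto (fun t => deriv g t - deriv g 0 - D2 * t) (𝓝 0)
          (𝓝 (deriv g 0 - deriv g 0 - D2 * 0)) :=
        (hc.tendsto.sub tendsto_const_nhds).sub ((continuous_const.mul continuous_id).tendsto 0)
      simpa using this.mono_left nhdsWithin_le_nhds
    · have := hslope3.div_const 2
      refine this.congr fun t => ?_
      rw [div_div]
      push_cast
      ring_nf
  have T3 : Tendsto (fun t => (g t - g 0 - deriv g 0 * t - D2/2 * t^2) / t^3)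
      (𝓝[≠] (0:ℝ)) (𝓝 (D3/6)) := by
    have := lhop_step (φ := fun t => g t - g 0 - deriv g 0 * t - D2/2 * t^2)
      (φ' := fun t => deriv g t - deriv g 0 - D2 * t) (n := 2) (L := D3/6) ?_ ?_ ?_
    · simpa using this
    · filter_upwards [hevS] with t ht
      have h := (((hDg t ht).sub_const (g 0)).sub
        ((hasDerivAt_id t).const_mul (deriv g 0))).sub ((hasDerivAt_pow 2 t).const_mul (D2/2))
      refine h.congr_deriv ?_
      push_cast
      ring
    · have hc : ContinuousAt g 0 := (hDg 0 h0S).continuousAt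
      have : Tendsto (fun t => g t - g 0 - deriv g 0 * t - D2/2 * t^2) (𝓝 0)
          (𝓝 (g 0 - g 0 - deriv g 0 * 0 - D2/2 * 0^2)) :=
        ((hc.tendsto.sub tendsto_const_nhds).sub
          ((continuous_const.mul continuous_id).tendsto 0)).sub
          ((continuous_const.mul (continuous_pow 2)).tendsto 0)
      simpa using this.mono_left nhdsWithin_le_nhds
    · have := Tint.div_const 3
      rw [show D3/2/3 = D3/6 by ring] at this
      refine this.congr fun t => ?_
      rw [div_div]
      push_cast
      ring_nf
  -- concavity: D2 ≤ 0
  have hD2le : D2 ≤ 0 := by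
    have hneg : Tendsto (fun t : ℝ => -t) (𝓝[>] (0:ℝ)) (𝓝[≠] (0:ℝ)) := by
      apply tendsto_nhdsWithin_of_tendsto_nhds_of_eventually_within
      · simpa using (continuous_neg.tendsto (0:ℝ)).mono_left nhdsWithin_le_nhds
      · filter_upwards [self_mem_nhdsWithin] with t (ht : t ∈ Set.Ioi (0:ℝ))
        simp only [Set.mem_compl_iff, Set.mem_singleton_iff, neg_eq_zero]
        exact ne_of_gt ht
    have hmono : 𝓝[>] (0:ℝ) ≤ 𝓝[≠] (0:ℝ) :=
      nhdsWithin_mono _ fun t ht => ne_of_gt ht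
    have key : Tendsto (fun t => (g t - g 0 - deriv g 0 * t) / t^2 +
        (g (-t) - g 0 - deriv g 0 * (-t)) / (-t)^2) (𝓝[>] (0:ℝ)) (𝓝 (D2/2 + D2/2)) :=
      (T2.mono_left hmono).add (T2.comp hneg)
    have hev : ∀ᶠ t in 𝓝[>] (0:ℝ), (g t - g 0 - deriv g 0 * t) / t^2 +
        (g (-t) - g 0 - deriv g 0 * (-t)) / (-t)^2 ≤ 0 := by
      have hevS' : ∀ᶠ t in 𝓝[>] (0:ℝ), t ∈ S :=
        eventually_nhdsWithin_of_eventually_nhds (eventually_of_mem hSnhds fun t ht => ht)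
      filter_upwards [hevS', self_mem_nhdsWithin] with t htS (ht : t ∈ Set.Ioi (0:ℝ))
      have htS' : -t ∈ S := by
        simp only [hSdef, Set.mem_Ioo] at htS ⊢
        constructor <;> nlinarith [htS.1, htS.2]
      have hcc := hconc.2 htS htS' (by norm_num : (0:ℝ) ≤ 1/2) (by norm_num : (0:ℝ) ≤ 1/2)
        (by norm_num)
      simp only [smul_eq_mul] at hcc
      have h2 : (1:ℝ)/2 * t + 1/2 * (-t) = 0 := by ring
      rw [h2] at hcc
      have ht0 : (0:ℝ) < t^2 := pow_pos ht 2
      have : (g t - g 0 - deriv g 0 * t) / t^2 + (g (-t) - g 0 - deriv g 0 * (-t)) / (-t)^2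
          = (g t + g (-t) - 2 * g 0) / t^2 := by
        rw [neg_pow]
        field_simp
        ring
      rw [this]
      apply div_nonpos_of_nonpos_of_nonneg _ (le_of_lt ht0)
      nlinarith [hcc]
    have hne : (𝓝[>] (0:ℝ)).NeBot := inferInstance
    have := le_of_tendsto key hev
    linarith
  -- the integral side
  have hae : ∀ᵐ s ∂μ, s ∈ Set.Icc (-1:ℝ) 1 := by
    rw [ae_iff]
    exact hsupp
  set A := (μ Set.univ).toReal with hAdef
  have hA0 : 0 ≤ A := ENNReal.toReal_nonneg
  have hint_s : Integrable (fun s : ℝ => s) μ := by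
    refine Integrable.mono' (integrable_const 1) measurable_id.aestronglyMeasurable ?_
    filter_upwards [hae] with s hs
    rw [Real.norm_eq_abs, abs_le]
    exact ⟨hs.1, hs.2⟩
  set B := ∫ s, s ∂μ with hBdef
  have hBA : B ≤ A := by
    have : B ≤ ∫ _, (1:ℝ) ∂μ := by
      apply integral_mono_ae hint_s (integrable_const 1)
      filter_upwards [hae] with s hs
      exact hs.2
    exact (by simpa [integral_const, smul_eq_mul] using this : B ≤ μ.real Set.univ)
  -- integrability and decomposition for each t ∈ S
  have hbound : ∀ t : ℝ, |t| < 1 → ∀ s ∈ Set.Icc (-1:ℝ) 1, 1 - |t| ≤ 1 - s * t := by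
    intro t ht s hs
    have : |s * t| ≤ |t| := by
      rw [abs_mul]
      calc |s| * |t| ≤ 1 * |t| := by
            apply mul_le_mul_of_nonneg_right _ (abs_nonneg t)
            rw [abs_le]; exact ⟨hs.1, hs.2⟩
        _ = |t| := one_mul _
    have := abs_le.1 this
    linarith [this.1]
  have hintR : ∀ t : ℝ, |t| < 1 → Integrable (fun s : ℝ => s^2 / (1 - s * t)) μ := by
    intro t ht
    refine Integrable.mono' (integrable_const (1/(1 - |t|)))
      ((measurable_id.pow_const 2).div
        ((measurable_const.sub (measurable_id.mul_const t)))).aestronglyMeasurable ?_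
    filter_upwards [hae] with s hs
    have h1 : 1 - |t| ≤ 1 - s * t := hbound t ht s hs
    have h2 : (0:ℝ) < 1 - |t| := by linarith
    have h3 : (0:ℝ) < 1 - s * t := lt_of_lt_of_le h2 h1
    rw [Real.norm_eq_abs, abs_div, abs_of_pos h3]
    have hs2 : s^2 ≤ 1 := by nlinarith [hs.1, hs.2]
    rw [div_le_div_iff₀ h3 h2]
    have : |s^2| = s^2 := abs_of_nonneg (sq_nonneg s)
    rw [this]
    nlinarith [sq_nonneg s, h1, h2]
  set R : ℝ → ℝ := fun t => ∫ s, s^2 / (1 - s * t) ∂μ with hRdef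
  have hsplit : ∀ t ∈ S, (∫ s, t^2 / (1 - s * t) ∂μ) = A * t^2 + B * t^3 + R t * t^4 := by
    intro t htS
    have ht : |t| < 1 := abs_lt.2 ⟨htS.1, htS.2⟩
    have hcong : (∫ s, t^2 / (1 - s * t) ∂μ)
        = ∫ s, (t^2 + (s * t^3 + (s^2 / (1 - s * t)) * t^4)) ∂μ := by
      apply integral_congr_ae
      filter_upwards [hae] with s hs
      have h3 : (0:ℝ) < 1 - s * t := lt_of_lt_of_le (by linarith) (hbound t ht s hs)
      have h3' : 1 - s * t ≠ 0 := h3.ne'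
      have h3'' : 1 - t * s ≠ 0 := by rw [mul_comm]; exact h3.ne'
      field_simp
      ring
    have i1 : Integrable (fun s : ℝ => s * t^3) μ := hint_s.mul_const _
    have i2 : Integrable (fun s : ℝ => s^2/(1-s*t) * t^4) μ := (hintR t ht).mul_const _
    have i12 : Integrable (fun s : ℝ => s * t^3 + s^2/(1-s*t) * t^4) μ := i1.add i2
    rw [hcong, integral_add (integrable_const _) i12, integral_add i1 i2,
      integral_const, integral_mul_const, integral_mul_const]
    simp only [smul_eq_mul, Measure.real, ← hAdef]
    ring
  -- bound on R near 0
  have hRb : ∀ t : ℝ, |t| ≤ 1/2 → |R t| ≤ 2 * A := by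
    intro t ht
    have ht1 : |t| < 1 := lt_of_le_of_lt ht (by norm_num)
    have := norm_integral_le_of_norm_le_const (μ := μ)
      (f := fun s : ℝ => s^2 / (1 - s * t)) (C := 2) ?_
    · rw [Real.norm_eq_abs] at this
      calc |R t| ≤ 2 * (μ Set.univ).toReal := this
        _ = 2 * A := rfl
    · filter_upwards [hae] with s hs
      have h1 : 1 - |t| ≤ 1 - s * t := hbound t ht1 s hs
      have h2 : (1:ℝ)/2 ≤ 1 - |t| := by linarith
      have h3 : (0:ℝ) < 1 - s * t := by linarith
      rw [Real.norm_eq_abs, abs_div, abs_of_pos h3, abs_of_nonneg (sq_nonneg s)]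
      have hs2 : s^2 ≤ 1 := by nlinarith [hs.1, hs.2]
      rw [div_le_iff₀ h3]
      nlinarith
  have hRt : Tendsto (fun t => R t * t) (𝓝[≠] (0:ℝ)) (𝓝 0) := by
    apply squeeze_zero_norm' (a := fun t => 2 * A * |t|)
    · have : ∀ᶠ t in 𝓝[≠] (0:ℝ), |t| ≤ 1/2 := by
        apply eventually_nhdsWithin_of_eventually_nhds
        have : ∀ᶠ t in 𝓝 (0:ℝ), t ∈ Set.Ioo (-(1/2) : ℝ) (1/2) :=
          eventually_of_mem (isOpen_Ioo.mem_nhds (by constructor <;> norm_num)) fun t ht => ht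
        filter_upwards [this] with t ht
        rw [abs_le]
        exact ⟨le_of_lt ht.1, le_of_lt ht.2⟩
      filter_upwards [this] with t ht
      rw [Real.norm_eq_abs, abs_mul]
      exact mul_le_mul_of_nonneg_right (hRb t ht) (abs_nonneg t)
    · have : Tendsto (fun t : ℝ => 2 * A * |t|) (𝓝 0) (𝓝 (2 * A * |0|)) :=
        (continuous_const.mul continuous_abs).tendsto 0
      simpa using this.mono_left nhdsWithin_le_nhds
  set c := (1/2) * iteratedDeriv 2 g 0 with hcdef
  -- limit matching, order 2
  have hq2 : Tendsto (fun t => (g t - g 0 - deriv g 0 * t) / t^2) (𝓝[≠] (0:ℝ))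
      (𝓝 (c * A)) := by
    have hx : Tendsto (fun t : ℝ => t) (𝓝[≠] (0:ℝ)) (𝓝 0) :=
      tendsto_nhdsWithin_of_tendsto_nhds (by exact continuous_id.tendsto (0:ℝ))
    have hfun : Tendsto (fun t => c * A + c * B * t + c * (R t * t * t)) (𝓝[≠] (0:ℝ))
        (𝓝 (c * A + c * B * 0 + c * (0 * 0))) :=
      (tendsto_const_nhds.add (tendsto_const_nhds.mul hx)).add
        (tendsto_const_nhds.mul (hRt.mul hx))
    have h0 : c * A + c * B * 0 + c * (0 * 0) = c * A := by ring
    rw [h0] at hfun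
    refine hfun.congr' ?_
    filter_upwards [hevS, self_mem_nhdsWithin] with t htS (htne : t ≠ 0)
    have hnum : g t - g 0 - deriv g 0 * t = c * (A * t^2 + B * t^3 + R t * t^4) := by
      rw [hrep t htS, hsplit t htS]; ring
    rw [hnum]
    field_simp
  have e1 : c * A = D2 / 2 := tendsto_nhds_unique hq2 T2
  -- limit matching, order 3
  have hq3 : Tendsto (fun t => (g t - g 0 - deriv g 0 * t - D2/2 * t^2) / t^3) (𝓝[≠] (0:ℝ))
      (𝓝 (c * B)) := by
    have hfun : Tendsto (fun t => c * B + c * (R t * t)) (𝓝[≠] (0:ℝ))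
        (𝓝 (c * B + c * 0)) := tendsto_const_nhds.add (tendsto_const_nhds.mul hRt)
    have h0 : c * B + c * 0 = c * B := by ring
    rw [h0] at hfun
    refine hfun.congr' ?_
    filter_upwards [hevS, self_mem_nhdsWithin] with t htS (htne : t ≠ 0)
    have hnum : g t - g 0 - deriv g 0 * t - D2/2 * t^2
        = c * B * t^3 + c * (R t * t^4) := by
      rw [hrep t htS, hsplit t htS, ← e1]; ring
    rw [hnum]
    field_simp
  have e2 : c * B = D3 / 6 := tendsto_nhds_unique hq3 T3
  -- finish
  rw [hiD2, hiD3]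
  have hc2 : c = D2 / 2 := by rw [hcdef, hiD2]; ring
  rw [hc2] at e1 e2
  -- e1 : D2/2 * A = D2/2, e2 : D2/2 * B = D3/6, hBA : B ≤ A, hD2le : D2 ≤ 0
  nlinarith [mul_le_mul_of_nonpos_left hBA hD2le, e1, e2, hD2le]
end

section
/- Let f be operator monotone on (γ,∞) for some γ > 0, so that f admits the Loewner integral representation f(x) = α + βx + ∫_{−∞}^{γ} (1/(s−x) − s/(s²+1)) dμ(s) with β ≥ 0 and μ a positive Borel measure on (−∞,γ]. Then the transpose f̂(x) = x·f(1/x) is operator concave on (0, 1/γ). -/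
open Matrix MeasureTheory ComplexOrder

/-- `f` is matrix convex of order `m` on `I ⊆ ℝ`: for Hermitian matrices with spectra
in `I`, `λ f(X) + (1−λ) f(Y) − f(λX + (1−λ)Y) ⪰ 0`, where `f` is applied spectrally
(via the continuous functional calculus). -/
def MatrixConvexOnOrder (m : ℕ) (I : Set ℝ) (f : ℝ → ℝ) : Prop :=
  ∀ X Y : Matrix (Fin m) (Fin m) ℂ, X.IsHermitian → Y.IsHermitian →
    spectrum ℝ X ⊆ I → spectrum ℝ Y ⊆ I →
    ∀ lam : ℝ, lam ∈ Set.Icc (0 : ℝ) 1 →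
      (lam • cfc f X + (1 - lam) • cfc f Y - cfc f (lam • X + (1 - lam) • Y)).PosSemidef

/-- `f` is operator convex on `I`: matrix convex of every order. -/
def OperatorConvexOn (I : Set ℝ) (f : ℝ → ℝ) : Prop :=
  ∀ m : ℕ, MatrixConvexOnOrder m I f

/-- `f` is operator concave on `I`: `−f` is operator convex. -/
def OperatorConcaveOn (I : Set ℝ) (f : ℝ → ℝ) : Prop :=
  OperatorConvexOn I (fun x => -f x)

namespace OpCcv

variable {n : Type*} [Fintype n] [DecidableEq n]

/-- quadratic form of a conjugated diagonal matrix -/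
lemma qf_conj_diag (U : Matrix n n ℂ) (d : n → ℂ)
    (v : n → ℂ) :
    star v ⬝ᵥ ((U * diagonal d * star U) *ᵥ v)
      = ∑ i, d i * ((Complex.normSq ((star U *ᵥ v) i) : ℝ) : ℂ) := by
  have h1 : (U * diagonal d * star U) *ᵥ v = U *ᵥ (diagonal d *ᵥ (star U *ᵥ v)) := by
    simp [mulVec_mulVec, Matrix.mul_assoc]
  rw [h1]
  set w := star U *ᵥ v with hw
  have h2 : star v ⬝ᵥ (U *ᵥ (diagonal d *ᵥ w)) = star w ⬝ᵥ (diagonal d *ᵥ w) := by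
    rw [dotProduct_mulVec]
    congr 1
    rw [hw, star_mulVec, star_eq_conjTranspose, conjTranspose_conjTranspose]
  rw [h2]
  simp only [dotProduct, mulVec_diagonal, Pi.star_apply]
  congr 1
  ext i
  rw [Complex.normSq_eq_conj_mul_self]
  simp only [Pi.star_apply, RCLike.star_def]
  ring

variable {X : Matrix n n ℂ} (hX : X.IsHermitian)

/-- weights of a vector in the eigenbasis -/
noncomputable def wt (v : n → ℂ) (i : n) : ℝ :=
  Complex.normSq ((star (hX.eigenvectorUnitary : Matrix n n ℂ) *ᵥ v) i)

lemma wt_nonneg (v : n → ℂ) (i : n) : 0 ≤ wt hX v i := Complex.normSq_nonneg _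

/-- the quadratic form of `cfc f X` as a real number -/
noncomputable def QF (f : ℝ → ℝ) (v : n → ℂ) : ℝ :=
  ∑ i, f (hX.eigenvalues i) * wt hX v i

lemma qf_cfcm (f : ℝ → ℝ) (v : n → ℂ) :
    star v ⬝ᵥ (hX.cfc f *ᵥ v) = ((QF hX f v : ℝ) : ℂ) := by
  rw [Matrix.IsHermitian.cfc, Unitary.conjStarAlgAut_apply, qf_conj_diag]
  rw [QF]
  push_cast
  rfl

lemma cfcm_congr {f g : ℝ → ℝ} (h : ∀ i, f (hX.eigenvalues i) = g (hX.eigenvalues i)) :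
    hX.cfc f = hX.cfc g := by
  rw [Matrix.IsHermitian.cfc, Matrix.IsHermitian.cfc]
  have : (RCLike.ofReal ∘ f ∘ hX.eigenvalues : n → ℂ) = RCLike.ofReal ∘ g ∘ hX.eigenvalues := by
    funext i; simp [h i]
  rw [this]

lemma cfcm_mul (f g : ℝ → ℝ) :
    hX.cfc f * hX.cfc g = hX.cfc (fun x => f x * g x) := by
  rw [Matrix.IsHermitian.cfc, Matrix.IsHermitian.cfc, Matrix.IsHermitian.cfc, Unitary.conjStarAlgAut_apply, Unitary.conjStarAlgAut_apply, Unitary.conjStarAlgAut_apply]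
  have hUU : (hX.eigenvectorUnitary : Matrix n n ℂ) * star (hX.eigenvectorUnitary : Matrix n n ℂ) = 1 :=
    Matrix.mem_unitaryGroup_iff.mp hX.eigenvectorUnitary.2
  have : ∀ a b c d e f : Matrix n n ℂ, (a * b * c) * (d * e * f) = a * (b * (c * d) * e) * f := by
    intros; simp only [Matrix.mul_assoc]
  rw [this]
  rw [Matrix.mem_unitaryGroup_iff'.mp hX.eigenvectorUnitary.2]
  rw [Matrix.mul_one, diagonal_mul_diagonal]
  have hd : (fun i => (RCLike.ofReal ∘ f ∘ hX.eigenvalues) i * (RCLike.ofReal ∘ g ∘ hX.eigenvalues) i : n → ℂ)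
      = RCLike.ofReal ∘ (fun x => f x * g x) ∘ hX.eigenvalues := by
    funext i; simp [RCLike.ofReal_mul]
  rw [hd]

lemma cfcm_one : hX.cfc (fun _ => 1) = 1 := by
  rw [Matrix.IsHermitian.cfc, Unitary.conjStarAlgAut_apply]
  have : (diagonal (RCLike.ofReal ∘ (fun _ : ℝ => (1:ℝ)) ∘ hX.eigenvalues) : Matrix n n ℂ) = 1 := by
    simp [Function.comp_def]
  rw [this, Matrix.mul_one, Matrix.mem_unitaryGroup_iff.mp hX.eigenvectorUnitary.2]

lemma cfcm_id : hX.cfc (fun x => x) = X := by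
  rw [Matrix.IsHermitian.cfc]
  exact hX.spectral_theorem.symm

lemma cfcm_herm (f : ℝ → ℝ) : (hX.cfc f).IsHermitian := by
  rw [Matrix.IsHermitian.cfc, Unitary.conjStarAlgAut_apply]
  rw [Matrix.IsHermitian]
  simp only [conjTranspose_mul, star_eq_conjTranspose, conjTranspose_conjTranspose,
    diagonal_conjTranspose, Matrix.mul_assoc, Pi.star_def, Function.comp_def,
    RCLike.star_def, Complex.conj_ofReal, RCLike.conj_ofReal]

lemma cfcm_inv {f : ℝ → ℝ} (h : ∀ i, f (hX.eigenvalues i) ≠ 0) :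
    (hX.cfc f)⁻¹ = hX.cfc (fun x => (f x)⁻¹) := by
  apply Matrix.inv_eq_right_inv
  rw [cfcm_mul]
  rw [cfcm_congr hX (g := fun _ => 1) (fun i => mul_inv_cancel₀ (h i))]
  exact cfcm_one hX

lemma cfcm_posDef {f : ℝ → ℝ} (h : ∀ i, 0 < f (hX.eigenvalues i)) : (hX.cfc f).PosDef := by
  refine Matrix.PosDef.of_dotProduct_mulVec_pos (cfcm_herm hX f) (fun v hv => ?_)
  have hUU : (hX.eigenvectorUnitary : Matrix n n ℂ) * star (hX.eigenvectorUnitary : Matrix n n ℂ) = 1 :=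
    Matrix.mem_unitaryGroup_iff.mp hX.eigenvectorUnitary.2
  rw [Matrix.IsHermitian.cfc, Unitary.conjStarAlgAut_apply, qf_conj_diag]
  have hw : star (hX.eigenvectorUnitary : Matrix n n ℂ) *ᵥ v ≠ 0 := by
    intro h0
    apply hv
    have : (hX.eigenvectorUnitary : Matrix n n ℂ) *ᵥ (star (hX.eigenvectorUnitary : Matrix n n ℂ) *ᵥ v) = 0 := by
      rw [h0, Matrix.mulVec_zero]
    rwa [Matrix.mulVec_mulVec, hUU, Matrix.one_mulVec] at this
  set w := star (hX.eigenvectorUnitary : Matrix n n ℂ) *ᵥ v with hwdef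
  obtain ⟨i0, hi0⟩ := Function.ne_iff.mp hw
  have : ∀ i, ((RCLike.ofReal ∘ f ∘ hX.eigenvalues) i : ℂ) * ((Complex.normSq (w i) : ℝ) : ℂ)
      = (((f (hX.eigenvalues i) * Complex.normSq (w i) : ℝ)) : ℂ) := by
    intro i; push_cast; rfl
  rw [Finset.sum_congr rfl (fun i _ => this i), ← Complex.ofReal_sum]
  rw [Complex.zero_lt_real]
  apply Finset.sum_pos'
  · intro i _
    exact mul_nonneg (h i).le (Complex.normSq_nonneg _)
  · exact ⟨i0, Finset.mem_univ _, mul_pos (h i0) (Complex.normSq_pos.mpr hi0)⟩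

lemma cfcm_lin (s : ℝ) : hX.cfc (fun x => 1 - s * x) = 1 - s • X := by
  have hUU : (hX.eigenvectorUnitary : Matrix n n ℂ) * star (hX.eigenvectorUnitary : Matrix n n ℂ) = 1 :=
    Matrix.mem_unitaryGroup_iff.mp hX.eigenvectorUnitary.2
  rw [Matrix.IsHermitian.cfc, Unitary.conjStarAlgAut_apply]
  have hd : (diagonal (RCLike.ofReal ∘ (fun x => 1 - s * x) ∘ hX.eigenvalues) : Matrix n n ℂ)
      = 1 - s • diagonal (RCLike.ofReal ∘ hX.eigenvalues) := by
    ext i j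
    by_cases hij : i = j
    · subst hij
      simp only [diagonal_apply_eq, Function.comp_apply, Matrix.sub_apply, Matrix.one_apply_eq,
        Matrix.smul_apply, RCLike.real_smul_eq_coe_mul]
      push_cast
      ring_nf
    · simp [diagonal_apply_ne _ hij, hij]
  have hsp := hX.spectral_theorem
  rw [Unitary.conjStarAlgAut_apply] at hsp
  rw [hd, Matrix.mul_sub, Matrix.sub_mul, Matrix.mul_one, hUU, mul_smul_comm, smul_mul_assoc,
    ← hsp]

lemma key_ineq (M : Matrix n n ℂ) (hM : M.PosDef) (v w : n → ℂ) :
    star w ⬝ᵥ v + star v ⬝ᵥ w - star w ⬝ᵥ (M *ᵥ w) ≤ star v ⬝ᵥ (M⁻¹ *ᵥ v) := by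
  have hdet : IsUnit M.det := (Matrix.isUnit_iff_isUnit_det M).mp hM.isUnit
  have hMu : M *ᵥ (M⁻¹ *ᵥ v) = v := by
    rw [Matrix.mulVec_mulVec, Matrix.mul_nonsing_inv _ hdet, Matrix.one_mulVec]
  have e1 : ∀ z, star (M⁻¹ *ᵥ v) ⬝ᵥ (M *ᵥ z) = star v ⬝ᵥ z := by
    intro z
    rw [star_mulVec, hM.isHermitian.inv.eq, dotProduct_mulVec, Matrix.vecMul_vecMul,
      Matrix.nonsing_inv_mul _ hdet, Matrix.vecMul_one]
  have h := hM.posSemidef.dotProduct_mulVec_nonneg (w - M⁻¹ *ᵥ v)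
  rw [Matrix.mulVec_sub, star_sub, sub_dotProduct, dotProduct_sub, dotProduct_sub] at h
  simp only [e1] at h
  rw [hMu] at h
  have h2 : (0:ℂ) ≤ star v ⬝ᵥ (M⁻¹ *ᵥ v)
      - (star w ⬝ᵥ v + star v ⬝ᵥ w - star w ⬝ᵥ (M *ᵥ w)) := by
    convert h using 1
    ring
  exact sub_nonneg.mp h2

lemma smul_isHermitian {M : Matrix n n ℂ} (hM : M.IsHermitian) (c : ℝ) :
    (c • M).IsHermitian := by
  rw [Matrix.IsHermitian, conjTranspose_smul, hM.eq, star_trivial]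

lemma combo_posDef {A B : Matrix n n ℂ} (hA : A.PosDef) (hB : B.PosDef) {lam : ℝ}
    (h0 : 0 ≤ lam) (h1 : lam ≤ 1) : (lam • A + (1 - lam) • B).PosDef := by
  refine Matrix.PosDef.of_dotProduct_mulVec_pos ?_ ?_
  · exact (smul_isHermitian hA.1 lam).add (smul_isHermitian hB.1 (1 - lam))
  · intro v hv
    have qA := hA.dotProduct_mulVec_pos hv
    have qB := hB.dotProduct_mulVec_pos hv
    rw [Matrix.add_mulVec, dotProduct_add, Matrix.smul_mulVec, Matrix.smul_mulVec,
      dotProduct_smul, dotProduct_smul, Complex.real_smul, Complex.real_smul]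
    by_cases hlam : 0 < lam
    · exact add_pos_of_pos_of_nonneg (mul_pos (Complex.zero_lt_real.2 hlam) qA)
        (mul_nonneg (Complex.zero_le_real.2 (by linarith)) qB.le)
    · exact add_pos_of_nonneg_of_pos (mul_nonneg (Complex.zero_le_real.2 h0) qA.le)
        (mul_pos (Complex.zero_lt_real.2 (by
          rcases eq_or_lt_of_le h0 with h | h
          · rw [← h]; norm_num
          · exact absurd h hlam)) qB)

lemma inv_combo (A B : Matrix n n ℂ) (hA : A.PosDef) (hB : B.PosDef) (lam : ℝ)
    (h0 : 0 ≤ lam) (h1 : lam ≤ 1) (v : n → ℂ) :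
    star v ⬝ᵥ ((lam • A + (1 - lam) • B)⁻¹ *ᵥ v)
      ≤ (lam : ℂ) * (star v ⬝ᵥ (A⁻¹ *ᵥ v)) + (1 - (lam : ℂ)) * (star v ⬝ᵥ (B⁻¹ *ᵥ v)) := by
  set C := lam • A + (1 - lam) • B with hCdef
  have hC : C.PosDef := combo_posDef hA hB h0 h1
  have hdet : IsUnit C.det := (Matrix.isUnit_iff_isUnit_det C).mp hC.isUnit
  set w := C⁻¹ *ᵥ v with hwdef
  have hCw : C *ᵥ w = v := by
    rw [hwdef, Matrix.mulVec_mulVec, Matrix.mul_nonsing_inv _ hdet, Matrix.one_mulVec]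
  have hsplit : (lam : ℂ) * (star w ⬝ᵥ (A *ᵥ w)) + (1 - (lam : ℂ)) * (star w ⬝ᵥ (B *ᵥ w))
      = star w ⬝ᵥ v := by
    rw [← hCw, hCdef, Matrix.add_mulVec, dotProduct_add, Matrix.smul_mulVec,
      Matrix.smul_mulVec, dotProduct_smul, dotProduct_smul, Complex.real_smul,
      Complex.real_smul]
    push_cast
    ring
  have kA := key_ineq A hA v w
  have kB := key_ineq B hB v w
  have hkA := mul_le_mul_of_nonneg_left kA (Complex.zero_le_real.2 h0)
  have h1l : (0:ℂ) ≤ 1 - (lam:ℂ) := by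
    have h' := Complex.zero_le_real.2 (sub_nonneg.mpr h1)
    push_cast at h'
    exact h'
  have hkB := mul_le_mul_of_nonneg_left kB h1l
  have hsum := add_le_add hkA hkB
  have heq : star v ⬝ᵥ (C⁻¹ *ᵥ v)
      = (lam : ℂ) * (star w ⬝ᵥ v + star v ⬝ᵥ w - star w ⬝ᵥ (A *ᵥ w))
        + (1 - (lam : ℂ)) * (star w ⬝ᵥ v + star v ⬝ᵥ w - star w ⬝ᵥ (B *ᵥ w)) := by
    rw [← hwdef]
    linear_combination hsplit
  rw [heq]
  convert hsum using 2 <;> push_cast <;> ring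

lemma QF_congr {f g : ℝ → ℝ} (v : n → ℂ) (h : ∀ i, f (hX.eigenvalues i) = g (hX.eigenvalues i)) :
    QF hX f v = QF hX g v := by
  unfold QF
  exact Finset.sum_congr rfl fun i _ => by rw [h i]

lemma QF_neg (g : ℝ → ℝ) (v : n → ℂ) : QF hX (fun x => -g x) v = - QF hX g v := by
  unfold QF
  rw [← Finset.sum_neg_distrib]
  exact Finset.sum_congr rfl fun i _ => by ring

lemma QF_lin_comb (c1 c2 c3 : ℝ) (g : ℝ → ℝ) (v : n → ℂ) :
    QF hX (fun x => c1 * x + c2 + c3 * g x) v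
      = c1 * QF hX (fun x => x) v + c2 * QF hX (fun _ => 1) v + c3 * QF hX g v := by
  unfold QF
  rw [Finset.mul_sum, Finset.mul_sum, Finset.mul_sum, ← Finset.sum_add_distrib,
    ← Finset.sum_add_distrib]
  exact Finset.sum_congr rfl fun i _ => by ring

lemma qf_mem_Ioo {p q : ℝ} (v : n → ℂ) (hv1 : QF hX (fun _ => 1) v = 1)
    (heig : ∀ i, hX.eigenvalues i ∈ Set.Ioo p q) :
    QF hX (fun x => x) v ∈ Set.Ioo p q := by
  have hS : ∑ i, wt hX v i = 1 := by
    have := hv1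
    unfold QF at this
    simpa using this
  obtain ⟨i0, hi0⟩ : ∃ i, wt hX v i ≠ 0 := by
    by_contra hc
    push_neg at hc
    rw [Finset.sum_congr rfl (fun i _ => hc i)] at hS
    simp at hS
  have hi0' : 0 < wt hX v i0 := (wt_nonneg hX v i0).lt_of_ne' hi0
  unfold QF
  constructor
  · have h2 : ∑ i, p * wt hX v i < ∑ i, hX.eigenvalues i * wt hX v i := by
      refine Finset.sum_lt_sum
        (fun i _ => mul_le_mul_of_nonneg_right (heig i).1.le (wt_nonneg hX v i))
        ⟨i0, Finset.mem_univ _, mul_lt_mul_of_pos_right (heig i0).1 hi0'⟩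
    calc p = p * ∑ i, wt hX v i := by rw [hS]; ring
    _ = ∑ i, p * wt hX v i := by rw [Finset.mul_sum]
    _ < _ := h2
  · have h2 : ∑ i, hX.eigenvalues i * wt hX v i < ∑ i, q * wt hX v i := by
      refine Finset.sum_lt_sum
        (fun i _ => mul_le_mul_of_nonneg_right (heig i).2.le (wt_nonneg hX v i))
        ⟨i0, Finset.mem_univ _, mul_lt_mul_of_pos_right (heig i0).2 hi0'⟩
    calc ∑ i, hX.eigenvalues i * wt hX v i < ∑ i, q * wt hX v i := h2
    _ = q * ∑ i, wt hX v i := by rw [Finset.mul_sum]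
    _ = q := by rw [hS]; ring

lemma spec_combo {X Y : Matrix n n ℂ} (hX : X.IsHermitian) (hY : Y.IsHermitian)
    {p q lam : ℝ} (h0 : 0 ≤ lam) (h1 : lam ≤ 1)
    (hsX : ∀ i, hX.eigenvalues i ∈ Set.Ioo p q) (hsY : ∀ i, hY.eigenvalues i ∈ Set.Ioo p q)
    (hZ : (lam • X + (1 - lam) • Y).IsHermitian) :
    ∀ j, hZ.eigenvalues j ∈ Set.Ioo p q := by
  intro j
  set Z := lam • X + (1 - lam) • Y with hZdef
  set v : n → ℂ := (hZ.eigenvectorUnitary : Matrix n n ℂ) *ᵥ Pi.single j 1 with hvdef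
  -- weights of v in Z's eigenbasis are the indicator at j
  have hwtZ : ∀ i, wt hZ v i = if i = j then 1 else 0 := by
    intro i
    unfold wt
    rw [hvdef, Matrix.mulVec_mulVec, Matrix.mem_unitaryGroup_iff'.mp hZ.eigenvectorUnitary.2,
      Matrix.one_mulVec]
    by_cases hij : i = j
    · subst hij; simp [Pi.single_apply]
    · simp [Pi.single_apply, hij]
  have hQZ : ∀ g : ℝ → ℝ, QF hZ g v = g (hZ.eigenvalues j) := by
    intro g
    unfold QF
    rw [Finset.sum_eq_single j (fun i _ hij => by rw [hwtZ i, if_neg hij]; ring)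
      (fun h => absurd (Finset.mem_univ j) h)]
    rw [hwtZ j, if_pos rfl, mul_one]
  -- QF _ 1 v = 1 for all three matrices
  have hone : ∀ {W : Matrix n n ℂ} (hW : W.IsHermitian), (QF hW (fun _ => 1) v : ℂ) = star v ⬝ᵥ v := by
    intro W hW
    rw [← qf_cfcm hW, cfcm_one, Matrix.one_mulVec]
  have honeX : QF hX (fun _ => 1) v = 1 := by
    have h1' : ((QF hX (fun _ => 1) v : ℝ) : ℂ) = ((1 : ℝ) : ℂ) := by
      rw [hone hX, ← hone hZ, hQZ (fun _ => 1)]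
    exact_mod_cast h1'
  have honeY : QF hY (fun _ => 1) v = 1 := by
    have h1' : ((QF hY (fun _ => 1) v : ℝ) : ℂ) = ((1 : ℝ) : ℂ) := by
      rw [hone hY, ← hone hZ, hQZ (fun _ => 1)]
    exact_mod_cast h1'
  -- the eigenvalue is the convex combination of the two Rayleigh quotients
  have hcomb : hZ.eigenvalues j = lam * QF hX (fun x => x) v + (1 - lam) * QF hY (fun x => x) v := by
    have hc : ((hZ.eigenvalues j : ℝ) : ℂ)
        = ((lam * QF hX (fun x => x) v + (1 - lam) * QF hY (fun x => x) v : ℝ) : ℂ) := by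
      have eX : ∀ u : n → ℂ, star u ⬝ᵥ (X *ᵥ u) = ((QF hX (fun x => x) u : ℝ) : ℂ) := by
        intro u
        have h' := qf_cfcm hX (fun x => x) u
        rwa [cfcm_id hX] at h'
      have eY : ∀ u : n → ℂ, star u ⬝ᵥ (Y *ᵥ u) = ((QF hY (fun x => x) u : ℝ) : ℂ) := by
        intro u
        have h' := qf_cfcm hY (fun x => x) u
        rwa [cfcm_id hY] at h'
      rw [← hQZ (fun x => x), ← qf_cfcm hZ, cfcm_id hZ]
      rw [hZdef, Matrix.add_mulVec, dotProduct_add, Matrix.smul_mulVec,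
        Matrix.smul_mulVec, dotProduct_smul, dotProduct_smul, Complex.real_smul,
        Complex.real_smul, eX v, eY v]
      push_cast
      ring
    exact_mod_cast hc
  rw [hcomb]
  have hmX := qf_mem_Ioo hX v honeX hsX
  have hmY := qf_mem_Ioo hY v honeY hsY
  have hfin := (convex_Ioo p q) hmX hmY h0 (sub_nonneg.mpr h1) (by ring)
  simpa [smul_eq_mul] using hfin

lemma scalar_key {s x : ℝ} (hs0 : s ≠ 0) (hx0 : x ≠ 0) (h1 : 1 - s*x ≠ 0)
    (h2 : s - 1/x ≠ 0) :
    x * (1/(s - 1/x) - s/(s^2+1))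
      = (1/s - s/(s^2+1)) * x + 1/s^2 + (-(1/s^2)) * (1 - s*x)⁻¹ := by
  have h3 : (s^2 + 1 : ℝ) ≠ 0 := by positivity
  have e1 : 1/(s - 1/x) = x/(s*x - 1) := by
    rw [div_eq_div_iff h2 (by intro h; apply h1; linarith)]
    field_simp
  rw [e1]
  have e2 : x/(s*x-1) = -(x * (1 - s*x)⁻¹) := by
    rw [div_eq_iff (by intro h; apply h1; linarith)]
    have := inv_mul_cancel₀ h1
    linear_combination -x * this
  rw [e2]
  have ht := inv_mul_cancel₀ h1
  have hs' := inv_mul_cancel₀ hs0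
  linear_combination (s⁻¹^2*(1+s*x)) * ht + (x^2*(1 - s*x)⁻¹*(s⁻¹*s+1) + x*s⁻¹) * hs'

lemma sq_qf {X Y : Matrix n n ℂ} (hXh : X.IsHermitian) (hYh : Y.IsHermitian) (lam : ℝ)
    (h0 : 0 ≤ lam) (h1 : lam ≤ 1) (v : n → ℂ) :
    (0:ℂ) ≤ star v ⬝ᵥ ((lam • (X*X) + (1-lam) • (Y*Y)
        - (lam • X + (1-lam) • Y) * (lam • X + (1-lam) • Y)) *ᵥ v) := by
  have hkey : lam • (X*X) + (1-lam) • (Y*Y) - (lam • X + (1-lam) • Y) * (lam • X + (1-lam) • Y)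
      = (lam*(1-lam)) • ((X-Y)*(X-Y)) := by
    simp only [add_mul, mul_add, sub_mul, mul_sub, smul_mul_assoc, mul_smul_comm, smul_smul]
    module
  rw [hkey]
  have hpsd : ((X-Y)*(X-Y)).PosSemidef := by
    have h' : (X-Y).IsHermitian := hXh.sub hYh
    nth_rewrite 1 [← h'.eq]
    exact Matrix.posSemidef_conjTranspose_mul_self _
  have hq := hpsd.dotProduct_mulVec_nonneg v
  rw [Matrix.smul_mulVec, dotProduct_smul, Complex.real_smul]
  exact mul_nonneg (Complex.zero_le_real.2 (mul_nonneg h0 (by linarith))) hq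

lemma qf_id_combo {X Y : Matrix n n ℂ} (hX : X.IsHermitian) (hY : Y.IsHermitian) (lam : ℝ)
    (hZ : (lam • X + (1 - lam) • Y).IsHermitian) (v : n → ℂ) :
    lam * QF hX (fun x => x) v + (1 - lam) * QF hY (fun x => x) v = QF hZ (fun x => x) v := by
  have eW : ∀ {W : Matrix n n ℂ} (hW : W.IsHermitian) (u : n → ℂ),
      star u ⬝ᵥ (W *ᵥ u) = ((QF hW (fun x => x) u : ℝ) : ℂ) := by
    intro W hW u
    have h' := qf_cfcm hW (fun x => x) u
    rwa [cfcm_id hW] at h'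
  have hc : ((lam * QF hX (fun x => x) v + (1 - lam) * QF hY (fun x => x) v : ℝ) : ℂ)
      = ((QF hZ (fun x => x) v : ℝ) : ℂ) := by
    rw [← eW hZ v, Matrix.add_mulVec, Matrix.smul_mulVec, Matrix.smul_mulVec,
      dotProduct_add, dotProduct_smul, dotProduct_smul, Complex.real_smul, Complex.real_smul,
      eW hX v, eW hY v]
    push_cast
    ring
  exact_mod_cast hc

lemma qf_one_combo {X Y : Matrix n n ℂ} (hX : X.IsHermitian) (hY : Y.IsHermitian) (lam : ℝ)
    (hZ : (lam • X + (1 - lam) • Y).IsHermitian) (v : n → ℂ) :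
    lam * QF hX (fun _ => 1) v + (1 - lam) * QF hY (fun _ => 1) v = QF hZ (fun _ => 1) v := by
  have eW : ∀ {W : Matrix n n ℂ} (hW : W.IsHermitian),
      ((QF hW (fun _ => 1) v : ℝ) : ℂ) = star v ⬝ᵥ v := by
    intro W hW
    rw [← qf_cfcm hW, cfcm_one, Matrix.one_mulVec]
  have hXY : QF hX (fun _ => 1) v = QF hY (fun _ => 1) v := by
    have := (eW hX).trans (eW hY).symm
    exact_mod_cast this
  have hXZ : QF hX (fun _ => 1) v = QF hZ (fun _ => 1) v := by
    have := (eW hX).trans (eW hZ).symm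
    exact_mod_cast this
  rw [← hXY, ← hXZ]
  ring

lemma per_s {γ s lam : ℝ} (hγ : 0 < γ) (hs : s ≤ γ) {X Y : Matrix n n ℂ}
    (hX : X.IsHermitian) (hY : Y.IsHermitian)
    (hsX : ∀ i, hX.eigenvalues i ∈ Set.Ioo 0 (1/γ))
    (hsY : ∀ i, hY.eigenvalues i ∈ Set.Ioo 0 (1/γ))
    (h0 : 0 ≤ lam) (h1 : lam ≤ 1)
    (hZ : (lam • X + (1 - lam) • Y).IsHermitian) (v : n → ℂ) :
    lam * QF hX (fun x => x * (1/(s - 1/x) - s/(s^2+1))) v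
      + (1 - lam) * QF hY (fun x => x * (1/(s - 1/x) - s/(s^2+1))) v
      ≤ QF hZ (fun x => x * (1/(s - 1/x) - s/(s^2+1))) v := by
  have hsZ := spec_combo hX hY h0 h1 hsX hsY hZ
  have hfact : ∀ x : ℝ, x ∈ Set.Ioo 0 (1/γ) → 0 < 1 - s*x ∧ x ≠ 0 ∧ s - 1/x ≠ 0 := by
    intro x hx
    obtain ⟨hx0, hx1⟩ := hx
    have hγx : γ < 1/x := by
      rw [← one_div_one_div γ]
      exact one_div_lt_one_div_of_lt hx0 hx1
    have hsx : s < 1/x := lt_of_le_of_lt hs hγx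
    have hsx1 : s * x < 1 := by
      have := (lt_div_iff₀ hx0).mp hsx
      linarith
    exact ⟨by linarith, ne_of_gt hx0, sub_ne_zero.mpr (ne_of_lt hsx)⟩
  by_cases hs0 : s = 0
  · subst hs0
    have hcongr : ∀ {W : Matrix n n ℂ} (hW : W.IsHermitian),
        (∀ i, hW.eigenvalues i ∈ Set.Ioo 0 (1/γ)) →
        QF hW (fun x => x * (1/(0 - 1/x) - 0/(0^2+1))) v = - QF hW (fun x => x*x) v := by
      intro W hW hW'
      rw [← QF_neg]
      apply QF_congr
      intro i
      obtain ⟨-, hne, -⟩ := hfact _ (hW' i)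
      simp only [zero_div, sub_zero, zero_sub, one_div_neg_eq_neg_one_div, one_div_one_div, mul_neg]
    rw [hcongr hX hsX, hcongr hY hsY, hcongr hZ hsZ]
    have hsq : ∀ {W : Matrix n n ℂ} (hW : W.IsHermitian),
        ((QF hW (fun x => x*x) v : ℝ) : ℂ) = star v ⬝ᵥ ((W*W) *ᵥ v) := by
      intro W hW
      rw [← qf_cfcm hW]
      congr 2
      rw [← cfcm_mul hW, cfcm_id hW]
    have hq := sq_qf hX hY lam h0 h1 v
    rw [Matrix.sub_mulVec, Matrix.add_mulVec, Matrix.smul_mulVec, Matrix.smul_mulVec,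
      dotProduct_sub, dotProduct_add, dotProduct_smul, dotProduct_smul, Complex.real_smul,
      Complex.real_smul, ← hsq hX, ← hsq hY, ← hsq hZ] at hq
    have hq' : (0:ℝ) ≤ lam * QF hX (fun x => x*x) v + (1-lam) * QF hY (fun x => x*x) v
        - QF hZ (fun x => x*x) v := by
      exact_mod_cast hq
    linarith
  · set c1 : ℝ := 1/s - s/(s^2+1) with hc1def
    set c2 : ℝ := 1/s^2 with hc2def
    have hkey : ∀ {W : Matrix n n ℂ} (hW : W.IsHermitian),
        (∀ i, hW.eigenvalues i ∈ Set.Ioo 0 (1/γ)) →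
        QF hW (fun x => x * (1/(s - 1/x) - s/(s^2+1))) v
          = c1 * QF hW (fun x => x) v + c2 * QF hW (fun _ => 1) v
            + (-c2) * QF hW (fun x => (1 - s*x)⁻¹) v := by
      intro W hW hW'
      rw [← QF_lin_comb]
      apply QF_congr
      intro i
      obtain ⟨hpos, hne0, hne1⟩ := hfact _ (hW' i)
      rw [hc1def, hc2def]
      exact scalar_key hs0 hne0 (ne_of_gt hpos) hne1
    rw [hkey hX hsX, hkey hY hsY, hkey hZ hsZ]
    have hE := qf_id_combo hX hY lam hZ v
    have hS := qf_one_combo hX hY lam hZ v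
    have hA : (1 - s • X).PosDef := by
      rw [← cfcm_lin hX]
      exact cfcm_posDef hX (fun i => (hfact _ (hsX i)).1)
    have hB : (1 - s • Y).PosDef := by
      rw [← cfcm_lin hY]
      exact cfcm_posDef hY (fun i => (hfact _ (hsY i)).1)
    have hAinv : (1 - s • X)⁻¹ = hX.cfc (fun x => (1 - s*x)⁻¹) := by
      rw [← cfcm_lin hX, cfcm_inv hX (fun i => ne_of_gt (hfact _ (hsX i)).1)]
    have hBinv : (1 - s • Y)⁻¹ = hY.cfc (fun x => (1 - s*x)⁻¹) := by
      rw [← cfcm_lin hY, cfcm_inv hY (fun i => ne_of_gt (hfact _ (hsY i)).1)]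
    have hCinv : (1 - s • (lam • X + (1 - lam) • Y))⁻¹ = hZ.cfc (fun x => (1 - s*x)⁻¹) := by
      rw [← cfcm_lin hZ, cfcm_inv hZ (fun i => ne_of_gt (hfact _ (hsZ i)).1)]
    have hC : lam • (1 - s • X) + (1 - lam) • (1 - s • Y)
        = 1 - s • (lam • X + (1 - lam) • Y) := by module
    have hic := inv_combo (1 - s • X) (1 - s • Y) hA hB lam h0 h1 v
    rw [hC, hCinv, hAinv, hBinv, qf_cfcm hX, qf_cfcm hY, qf_cfcm hZ] at hic
    have hφ : QF hZ (fun x => (1 - s*x)⁻¹) v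
        ≤ lam * QF hX (fun x => (1 - s*x)⁻¹) v + (1 - lam) * QF hY (fun x => (1 - s*x)⁻¹) v := by
      rw [← Complex.real_le_real]
      push_cast
      exact hic
    have hc2 : (0:ℝ) ≤ c2 := by rw [hc2def]; positivity
    have hmul := mul_le_mul_of_nonneg_left hφ hc2
    set EX := QF hX (fun x => x) v
    set EY := QF hY (fun x => x) v
    set EZ := QF hZ (fun x => x) v
    set SX := QF hX (fun _ => 1) v
    set SY := QF hY (fun _ => 1) v
    set SZ := QF hZ (fun _ => 1) v
    set PX := QF hX (fun x => (1 - s*x)⁻¹) v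
    set PY := QF hY (fun x => (1 - s*x)⁻¹) v
    set PZ := QF hZ (fun x => (1 - s*x)⁻¹) v
    calc lam * (c1 * EX + c2 * SX + (-c2) * PX) + (1 - lam) * (c1 * EY + c2 * SY + (-c2) * PY)
        = c1 * (lam * EX + (1-lam) * EY) + c2 * (lam * SX + (1-lam) * SY)
          - c2 * (lam * PX + (1-lam) * PY) := by ring
      _ = c1 * EZ + c2 * SZ - c2 * (lam * PX + (1-lam) * PY) := by rw [hE, hS]
      _ ≤ c1 * EZ + c2 * SZ - c2 * PZ := by linarith
      _ = c1 * EZ + c2 * SZ + (-c2) * PZ := by ring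

lemma QF_expand {γ : ℝ} (f : ℝ → ℝ) (a b : ℝ) (μ : Measure ℝ)
    (hint : ∀ x ∈ Set.Ioi γ, Integrable (fun s => 1 / (s - x) - s / (s ^ 2 + 1)) μ)
    (hrep : ∀ x ∈ Set.Ioi γ, f x = a + b * x + ∫ s, (1 / (s - x) - s / (s ^ 2 + 1)) ∂μ)
    {X : Matrix n n ℂ} (hX : X.IsHermitian)
    (heig : ∀ i, hX.eigenvalues i ∈ Set.Ioo 0 (1/γ)) (v : n → ℂ) :
    QF hX (fun x => x * f (1/x)) v
      = a * QF hX (fun x => x) v + b * QF hX (fun _ => 1) v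
        + ∫ s, QF hX (fun x => x * (1/(s - 1/x) - s/(s^2+1))) v ∂μ := by
  have hIoi : ∀ i, 1/(hX.eigenvalues i) ∈ Set.Ioi γ := by
    intro i
    obtain ⟨h1, h2⟩ := heig i
    rw [Set.mem_Ioi, ← one_div_one_div γ]
    exact one_div_lt_one_div_of_lt h1 h2
  have hint' : ∀ i : n, Integrable
      (fun s => hX.eigenvalues i * (1/(s - 1/(hX.eigenvalues i)) - s/(s^2+1)) * wt hX v i) μ :=
    fun i => ((hint _ (hIoi i)).const_mul _).mul_const _
  have hpt : ∀ i, hX.eigenvalues i * f (1/(hX.eigenvalues i))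
      = a * hX.eigenvalues i + b
        + ∫ s, hX.eigenvalues i * (1/(s - 1/(hX.eigenvalues i)) - s/(s^2+1)) ∂μ := by
    intro i
    have hx0 : hX.eigenvalues i ≠ 0 := ne_of_gt (heig i).1
    rw [hrep _ (hIoi i), MeasureTheory.integral_const_mul]
    field_simp
  unfold QF
  rw [Finset.sum_congr rfl (fun i _ => show (fun x => x * f (1/x)) (hX.eigenvalues i) * wt hX v i
      = (a * hX.eigenvalues i + b
        + ∫ s, hX.eigenvalues i * (1/(s - 1/(hX.eigenvalues i)) - s/(s^2+1)) ∂μ) * wt hX v i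
      from by rw [← hpt i])]
  have step1 : ∑ i, (a * hX.eigenvalues i + b
        + ∫ s, hX.eigenvalues i * (1/(s - 1/(hX.eigenvalues i)) - s/(s^2+1)) ∂μ) * wt hX v i
      = (∑ i, a * (hX.eigenvalues i * wt hX v i)) + (∑ i, b * (1 * wt hX v i))
        + ∑ i, (∫ s, hX.eigenvalues i * (1/(s - 1/(hX.eigenvalues i)) - s/(s^2+1)) ∂μ) * wt hX v i := by
    rw [← Finset.sum_add_distrib, ← Finset.sum_add_distrib]
    exact Finset.sum_congr rfl fun i _ => by ring
  rw [step1, ← Finset.mul_sum, ← Finset.mul_sum]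
  congr 1
  rw [Finset.sum_congr rfl
    (fun i _ => (MeasureTheory.integral_mul_const (wt hX v i)
      (fun s => hX.eigenvalues i * (1/(s - 1/(hX.eigenvalues i)) - s/(s^2+1)))).symm)]
  exact (MeasureTheory.integral_finset_sum Finset.univ (fun i _ => hint' i)).symm

end OpCcv


open OpCcv in
/-- If `f` is operator monotone on `(γ,∞)` (via its Loewner integral representation
`f(x) = a + bx + ∫ (1/(s−x) − s/(s²+1)) dμ(s)` with `b ≥ 0` and `μ` a positive
Borel measure on `(−∞,γ]`), then the transpose `f̂(x) = x·f(1/x)` is operator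
concave on `(0, 1/γ)`. -/
theorem transpose_operator_concave (γ : ℝ) (hγ : 0 < γ) (f : ℝ → ℝ) (a b : ℝ)
    (hb : 0 ≤ b) (μ : Measure ℝ) (hsupp : μ (Set.Ioi γ) = 0)
    (hint : ∀ x ∈ Set.Ioi γ,
      Integrable (fun s => 1 / (s - x) - s / (s ^ 2 + 1)) μ)
    (hrep : ∀ x ∈ Set.Ioi γ,
      f x = a + b * x + ∫ s, (1 / (s - x) - s / (s ^ 2 + 1)) ∂μ) :
    OperatorConcaveOn (Set.Ioo 0 (1 / γ)) (fun x => x * f (1 / x)) := by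
  unfold OperatorConcaveOn OperatorConvexOn MatrixConvexOnOrder
  intro m X Y hX hY hsX hsY lam hlam
  obtain ⟨h0, h1⟩ := hlam
  have hZ : (lam • X + (1 - lam) • Y).IsHermitian :=
    (smul_isHermitian hX lam).add (smul_isHermitian hY (1 - lam))
  have heigX : ∀ i, hX.eigenvalues i ∈ Set.Ioo 0 (1/γ) :=
    fun i => hsX (hX.eigenvalues_mem_spectrum_real i)
  have heigY : ∀ i, hY.eigenvalues i ∈ Set.Ioo 0 (1/γ) :=
    fun i => hsY (hY.eigenvalues_mem_spectrum_real i)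
  have heigZ := spec_combo hX hY h0 h1 heigX heigY hZ
  refine Matrix.PosSemidef.of_dotProduct_mulVec_nonneg ?_ ?_
  · rw [hX.cfc_eq, hY.cfc_eq, hZ.cfc_eq]
    exact ((smul_isHermitian (cfcm_herm hX _) lam).add
      (smul_isHermitian (cfcm_herm hY _) (1 - lam))).sub (cfcm_herm hZ _)
  · intro v
    rw [hX.cfc_eq, hY.cfc_eq, hZ.cfc_eq, Matrix.sub_mulVec, Matrix.add_mulVec,
      Matrix.smul_mulVec, Matrix.smul_mulVec, dotProduct_sub, dotProduct_add,
      dotProduct_smul, dotProduct_smul, Complex.real_smul, Complex.real_smul,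
      qf_cfcm hX, qf_cfcm hY, qf_cfcm hZ]
    have hQnX : QF hX (fun x => -(x * f (1/x))) v = - QF hX (fun x => x * f (1/x)) v :=
      QF_neg hX _ v
    have hQnY : QF hY (fun x => -(x * f (1/x))) v = - QF hY (fun x => x * f (1/x)) v :=
      QF_neg hY _ v
    have hQnZ : QF hZ (fun x => -(x * f (1/x))) v = - QF hZ (fun x => x * f (1/x)) v :=
      QF_neg hZ _ v
    rw [hQnX, hQnY, hQnZ]
    -- integrability of the quadratic forms in s
    have hIoiW : ∀ x : ℝ, x ∈ Set.Ioo 0 (1/γ) → 1/x ∈ Set.Ioi γ := by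
      intro x hx
      obtain ⟨ha', hb'⟩ := hx
      rw [Set.mem_Ioi, ← one_div_one_div γ]
      exact one_div_lt_one_div_of_lt ha' hb'
    have hintW : ∀ {W : Matrix (Fin m) (Fin m) ℂ} (hW : W.IsHermitian),
        (∀ i, hW.eigenvalues i ∈ Set.Ioo 0 (1/γ)) →
        Integrable (fun s => QF hW (fun x => x * (1/(s - 1/x) - s/(s^2+1))) v) μ := by
      intro W hW heigW
      have h' : ∀ i : Fin m, Integrable (fun s =>
          hW.eigenvalues i * (1/(s - 1/(hW.eigenvalues i)) - s/(s^2+1)) * wt hW v i) μ :=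
        fun i => ((hint _ (hIoiW _ (heigW i))).const_mul _).mul_const _
      exact MeasureTheory.integrable_finset_sum Finset.univ (fun i _ => h' i)
    have hintX := hintW hX heigX
    have hintY := hintW hY heigY
    have hintZ := hintW hZ heigZ
    have haes : ∀ᵐ s ∂μ, s ≤ γ := by
      rw [MeasureTheory.ae_iff]
      have he : {x : ℝ | ¬ x ≤ γ} = Set.Ioi γ := by ext x; simp [not_le]
      rw [he]
      exact hsupp
    have key : lam * QF hX (fun x => x * f (1/x)) v + (1 - lam) * QF hY (fun x => x * f (1/x)) v
        ≤ QF hZ (fun x => x * f (1/x)) v := by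
      rw [QF_expand f a b μ hint hrep hX heigX v, QF_expand f a b μ hint hrep hY heigY v,
        QF_expand f a b μ hint hrep hZ heigZ v]
      have hE := qf_id_combo hX hY lam hZ v
      have hS := qf_one_combo hX hY lam hZ v
      have hImono : lam * (∫ s, QF hX (fun x => x * (1/(s - 1/x) - s/(s^2+1))) v ∂μ)
          + (1 - lam) * (∫ s, QF hY (fun x => x * (1/(s - 1/x) - s/(s^2+1))) v ∂μ)
          ≤ ∫ s, QF hZ (fun x => x * (1/(s - 1/x) - s/(s^2+1))) v ∂μ := by
        rw [← MeasureTheory.integral_const_mul, ← MeasureTheory.integral_const_mul,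
          ← MeasureTheory.integral_add (hintX.const_mul lam) (hintY.const_mul (1 - lam))]
        refine MeasureTheory.integral_mono_ae
          ((hintX.const_mul lam).add (hintY.const_mul (1 - lam))) hintZ ?_
        filter_upwards [haes] with s hs
        exact per_s hγ hs hX hY heigX heigY h0 h1 hZ v
      set EX := QF hX (fun x => x) v
      set EY := QF hY (fun x => x) v
      set EZ := QF hZ (fun x => x) v
      set SX := QF hX (fun _ => 1) v
      set SY := QF hY (fun _ => 1) v
      set SZ := QF hZ (fun _ => 1) v
      set IX := ∫ s, QF hX (fun x => x * (1/(s - 1/x) - s/(s^2+1))) v ∂μ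
      set IY := ∫ s, QF hY (fun x => x * (1/(s - 1/x) - s/(s^2+1))) v ∂μ
      set IZ := ∫ s, QF hZ (fun x => x * (1/(s - 1/x) - s/(s^2+1))) v ∂μ
      calc lam * (a * EX + b * SX + IX) + (1 - lam) * (a * EY + b * SY + IY)
          = a * (lam * EX + (1-lam) * EY) + b * (lam * SX + (1-lam) * SY)
            + (lam * IX + (1-lam) * IY) := by ring
        _ = a * EZ + b * SZ + (lam * IX + (1-lam) * IY) := by rw [hE, hS]
        _ ≤ a * EZ + b * SZ + IZ := by linarith [hImono]
    have hfin : (0:ℝ) ≤ lam * (- QF hX (fun x => x * f (1/x)) v)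
        + (1 - lam) * (- QF hY (fun x => x * f (1/x)) v)
        - (- QF hZ (fun x => x * f (1/x)) v) := by linarith
    calc (0:ℂ) = ((0:ℝ) : ℂ) := by norm_num
      _ ≤ ((lam * (- QF hX (fun x => x * f (1/x)) v)
            + (1 - lam) * (- QF hY (fun x => x * f (1/x)) v)
            - (- QF hZ (fun x => x * f (1/x)) v) : ℝ) : ℂ) := Complex.real_le_real.2 hfin
      _ = (lam : ℂ) * ((- QF hX (fun x => x * f (1/x)) v : ℝ) : ℂ)
            + ((1 - lam : ℝ) : ℂ) * ((- QF hY (fun x => x * f (1/x)) v : ℝ) : ℂ)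
            - ((- QF hZ (fun x => x * f (1/x)) v : ℝ) : ℂ) := by push_cast; ring
end

section
/- Let α ∈ [2,∞) and f(x,y) = −x^α y^{1−α} on (0,∞)². For all x, y > 0 and h, v ∈ ℝ with x ± h ≥ 0 and y ± v ≥ 0, the directional derivatives satisfy D³f(x,y)[(h,v)]³ ≤ (2α−1)·(−D²f(x,y)[(h,v)]²) · 3/3, i.e., D³f(x,y)[(h,v),(h,v),(h,v)] ≤ −3·((2α−1)/3)·D²f(x,y)[(h,v),(h,v)]. -/
set_option maxHeartbeats 2000000


/-- For `α ≥ 2` and `f(x,y) = −x^α y^{1−α}`, for all `x, y > 0` and directions `(h,v)`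
with `x ± h ≥ 0` and `y ± v ≥ 0`, the directional derivatives satisfy
`D³f[(h,v)]³ ≤ −3·((2α−1)/3)·D²f[(h,v)]²`. -/
theorem scalar_compatibility (α : ℝ) (hα : 2 ≤ α) (x y h v : ℝ)
    (hx : 0 < x) (hy : 0 < y)
    (hxp : 0 ≤ x + h) (hxm : 0 ≤ x - h) (hyp : 0 ≤ y + v) (hym : 0 ≤ y - v) :
    iteratedDeriv 3 (fun t : ℝ => -((x + t * h) ^ α * (y + t * v) ^ (1 - α))) 0
      ≤ -3 * ((2 * α - 1) / 3) *
        iteratedDeriv 2 (fun t : ℝ => -((x + t * h) ^ α * (y + t * v) ^ (1 - α))) 0 := by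
  set g : ℝ → ℝ := fun t => -((x + t * h) ^ α * (y + t * v) ^ (1 - α)) with hgdef
  set S : Set ℝ := {t | 0 < x + t * h ∧ 0 < y + t * v} with hSdef
  have hS : IsOpen S := by
    have h1 : IsOpen {t : ℝ | 0 < x + t * h} :=
      isOpen_lt continuous_const (by continuity)
    have h2 : IsOpen {t : ℝ | 0 < y + t * v} :=
      isOpen_lt continuous_const (by continuity)
    simpa [hSdef, Set.setOf_and] using h1.inter h2
  have h0 : (0 : ℝ) ∈ S := by simp [hSdef, hx, hy]
  -- general derivative of (x+th)^p (y+tv)^q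
  have hT : ∀ (p q t : ℝ), t ∈ S →
      HasDerivAt (fun t => (x + t * h) ^ p * (y + t * v) ^ q)
        (h * p * ((x + t * h) ^ (p - 1) * (y + t * v) ^ q)
          + v * q * ((x + t * h) ^ p * (y + t * v) ^ (q - 1))) t := by
    intro p q t ht
    obtain ⟨hP, hQ⟩ := ht
    have h1 : HasDerivAt (fun t : ℝ => x + t * h) h t := by
      simpa using ((hasDerivAt_id t).mul_const h).const_add x
    have h2 : HasDerivAt (fun t : ℝ => y + t * v) v t := by
      simpa using ((hasDerivAt_id t).mul_const v).const_add y
    have h3 := h1.rpow_const (p := p) (Or.inl hP.ne')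
    have h4 := h2.rpow_const (p := q) (Or.inl hQ.ne')
    have h5 := h3.mul h4
    exact h5.congr_deriv (by ring)
  set g1 : ℝ → ℝ := fun t =>
    -(h * α * ((x + t * h) ^ (α - 1) * (y + t * v) ^ (1 - α))
      + v * (1 - α) * ((x + t * h) ^ α * (y + t * v) ^ (-α))) with hg1def
  set g2 : ℝ → ℝ := fun t =>
    -(h * α * (h * (α - 1) * ((x + t * h) ^ (α - 2) * (y + t * v) ^ (1 - α))
          + v * (1 - α) * ((x + t * h) ^ (α - 1) * (y + t * v) ^ (-α)))
      + v * (1 - α) * (h * α * ((x + t * h) ^ (α - 1) * (y + t * v) ^ (-α))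
          + v * (-α) * ((x + t * h) ^ α * (y + t * v) ^ (-α - 1)))) with hg2def
  set g3 : ℝ → ℝ := fun t =>
    -(h * α * (h * (α - 1) * (h * (α - 2) * ((x + t * h) ^ (α - 3) * (y + t * v) ^ (1 - α))
            + v * (1 - α) * ((x + t * h) ^ (α - 2) * (y + t * v) ^ (-α)))
        + v * (1 - α) * (h * (α - 1) * ((x + t * h) ^ (α - 2) * (y + t * v) ^ (-α))
            + v * (-α) * ((x + t * h) ^ (α - 1) * (y + t * v) ^ (-α - 1))))
      + v * (1 - α) * (h * α * (h * (α - 1) * ((x + t * h) ^ (α - 2) * (y + t * v) ^ (-α))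
            + v * (-α) * ((x + t * h) ^ (α - 1) * (y + t * v) ^ (-α - 1)))
        + v * (-α) * (h * α * ((x + t * h) ^ (α - 1) * (y + t * v) ^ (-α - 1))
            + v * (-α - 1) * ((x + t * h) ^ α * (y + t * v) ^ (-α - 2))))) with hg3def
  have hder1 : ∀ t ∈ S, HasDerivAt g (g1 t) t := by
    intro t ht
    have h1 := (hT α (1 - α) t ht).neg
    rw [show (1 : ℝ) - α - 1 = -α by ring] at h1
    exact h1
  have hder2 : ∀ t ∈ S, HasDerivAt g1 (g2 t) t := by
    intro t ht
    have h1 := (((hT (α - 1) (1 - α) t ht).const_mul (h * α)).add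
      ((hT α (-α) t ht).const_mul (v * (1 - α)))).neg
    rw [show α - 1 - 1 = α - 2 by ring, show (1 : ℝ) - α - 1 = -α by ring] at h1
    exact h1
  have hder3 : ∀ t ∈ S, HasDerivAt g2 (g3 t) t := by
    intro t ht
    have h1 := (((hT (α - 2) (1 - α) t ht).const_mul (h * (α - 1))).add
        ((hT (α - 1) (-α) t ht).const_mul (v * (1 - α)))).const_mul (h * α)
    have h2 := (((hT (α - 1) (-α) t ht).const_mul (h * α)).add
        ((hT α (-α - 1) t ht).const_mul (v * (-α)))).const_mul (v * (1 - α))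
    have h3 := (h1.add h2).neg
    rw [show α - 2 - 1 = α - 3 by ring, show (1 : ℝ) - α - 1 = -α by ring,
      show α - 1 - 1 = α - 2 by ring] at h3
    exact h3.congr_deriv (by simp only [hg3def]; ring)
  have hd1 : Set.EqOn (deriv g) g1 S := fun t ht => (hder1 t ht).deriv
  have hd2 : Set.EqOn (deriv g1) g2 S := fun t ht => (hder2 t ht).deriv
  have ev1 : ∀ t ∈ S, deriv g =ᶠ[nhds t] g1 := fun t ht =>
    Filter.eventuallyEq_of_mem (hS.mem_nhds ht) hd1
  have hd2' : Set.EqOn (deriv (deriv g)) g2 S := fun t ht =>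
    ((ev1 t ht).deriv_eq).trans (hd2 ht)
  have ev2 : deriv (deriv g) =ᶠ[nhds 0] g2 :=
    Filter.eventuallyEq_of_mem (hS.mem_nhds h0) hd2'
  have key3 : deriv (deriv (deriv g)) 0 = g3 0 :=
    ev2.deriv_eq.trans ((hder3 0 h0).deriv)
  have key2 : deriv (deriv g) 0 = g2 0 := hd2' h0
  have e3 : iteratedDeriv 3 g = deriv (deriv (deriv g)) := by
    rw [show (3 : ℕ) = 2 + 1 from rfl, iteratedDeriv_succ,
      show (2 : ℕ) = 1 + 1 from rfl, iteratedDeriv_succ, iteratedDeriv_one]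
  have e2 : iteratedDeriv 2 g = deriv (deriv g) := by
    rw [show (2 : ℕ) = 1 + 1 from rfl, iteratedDeriv_succ, iteratedDeriv_one]
  rw [e3, e2, key3, key2]
  -- now a concrete inequality
  simp only [hg2def, hg3def, zero_mul, add_zero]
  have ea1 : x ^ (α - 1) = x ^ α / x := by
    rw [Real.rpow_sub hx, Real.rpow_one]
  have ea2 : x ^ (α - 2) = x ^ α / x ^ 2 := by
    rw [Real.rpow_sub hx, show (2 : ℝ) = ((2 : ℕ) : ℝ) by norm_num, Real.rpow_natCast]
  have ea3 : x ^ (α - 3) = x ^ α / x ^ 3 := by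
    rw [Real.rpow_sub hx, show (3 : ℝ) = ((3 : ℕ) : ℝ) by norm_num, Real.rpow_natCast]
  have eb1 : y ^ (-α) = y ^ (1 - α) / y := by
    rw [show -α = (1 - α) - 1 by ring, Real.rpow_sub hy, Real.rpow_one]
  have eb2 : y ^ (-α - 1) = y ^ (1 - α) / y ^ 2 := by
    rw [show -α - 1 = (1 - α) - 2 by ring, Real.rpow_sub hy,
      show (2 : ℝ) = ((2 : ℕ) : ℝ) by norm_num, Real.rpow_natCast]
  have eb3 : y ^ (-α - 2) = y ^ (1 - α) / y ^ 3 := by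
    rw [show -α - 2 = (1 - α) - 3 by ring, Real.rpow_sub hy,
      show (3 : ℝ) = ((3 : ℕ) : ℝ) by norm_num, Real.rpow_natCast]
  rw [ea1, ea2, ea3, eb1, eb2, eb3]
  have ha : (0 : ℝ) < x ^ α := Real.rpow_pos_of_pos hx α
  have hb : (0 : ℝ) < y ^ (1 - α) := Real.rpow_pos_of_pos hy (1 - α)
  set a := x ^ α with hadef
  set b := y ^ (1 - α) with hbdef
  have hC : 0 ≤ (2 * α - 1) * (x * y) + (α - 2) * (h * y) - (α + 1) * (v * x) := by
    nlinarith [mul_nonneg (mul_nonneg (by linarith : (0:ℝ) ≤ α - 2) hxp) hy.le,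
      mul_nonneg (mul_nonneg (by linarith : (0:ℝ) ≤ α + 1) hym) hx.le]
  have hE : 0 ≤ α * (α - 1) * (h * y - v * x) ^ 2 *
      ((2 * α - 1) * (x * y) + (α - 2) * (h * y) - (α + 1) * (v * x)) :=
    mul_nonneg (mul_nonneg (by nlinarith) (sq_nonneg _)) hC
  have hfac : 0 ≤ a * b / (x ^ 3 * y ^ 3) :=
    div_nonneg (mul_nonneg ha.le hb.le) (by positivity)
  have hkey := mul_nonneg hfac hE
  rw [← sub_nonneg]
  have heq : -3 * ((2 * α - 1) / 3) *
        -(h * α * (h * (α - 1) * (a / x ^ 2 * b) + v * (1 - α) * (a / x * (b / y)))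
          + v * (1 - α) * (h * α * (a / x * (b / y)) + v * -α * (a * (b / y ^ 2)))) -
      -(h * α * (h * (α - 1) * (h * (α - 2) * (a / x ^ 3 * b)
              + v * (1 - α) * (a / x ^ 2 * (b / y)))
          + v * (1 - α) * (h * (α - 1) * (a / x ^ 2 * (b / y))
              + v * -α * (a / x * (b / y ^ 2))))
        + v * (1 - α) * (h * α * (h * (α - 1) * (a / x ^ 2 * (b / y))
              + v * -α * (a / x * (b / y ^ 2)))
          + v * -α * (h * α * (a / x * (b / y ^ 2))
              + v * (-α - 1) * (a * (b / y ^ 3)))))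
      = a * b / (x ^ 3 * y ^ 3) * (α * (α - 1) * (h * y - v * x) ^ 2 *
          ((2 * α - 1) * (x * y) + (α - 2) * (h * y) - (α + 1) * (v * x))) := by
    field_simp
    ring
  rw [heq]
  exact hkey
end
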